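/- Let G be a finite simple graph and let G₀ ≤ G₁ ≤ ... ≤ Gₙ = G be an increasing chain of subgraphs of G whose last term is all of G. Then there exists an acyclic subgraph T of G with the same vertex set as G such that for every i ∈ {0,...,n} and all vertices u, v of Gᵢ, u and v are connected in Gᵢ if and only if u and v are connected in the subgraph whose vertex set is that of Gᵢ and whose edge set is E(T) ∩ E(Gᵢ). That is, there is a spanning forest of G that simultaneously restricts to a spanning forest of every subgraph in the chain. -/

import Mathlib

open SimpleGraph

private lemma myAcyclicAnti {V : Type*} {A B : SimpleGraph V} (h : A ≤ B)
    (hB : B.IsAcyclic) : A.IsAcyclic := fun _ c hc => hB (c.mapLe h) (hc.mapLe h)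

private lemma myAcyclicSupEdge {V : Type*} {A : SimpleGraph V} (hA : A.IsAcyclic)
    {u v : V} (hr : ¬A.Reachable u v) : (A ⊔ edge u v).IsAcyclic := by
  intro a c hc
  by_cases he : s(u, v) ∈ c.edges
  · have h2 := (adj_and_reachable_delete_edges_iff_exists_cycle).2 ⟨a, c, hc, he⟩
    apply hr
    refine h2.2.mono ?_
    intro x y hxy
    rw [deleteEdges_adj, sup_adj] at hxy
    rcases hxy with ⟨h1 | h1, h3⟩
    · exact h1
    · exact absurd (show s(x, y) ∈ ({s(u, v)} : Set (Sym2 V)) from h1.1) h3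
  · refine hA (c.transfer A fun e hec => ?_) (hc.transfer _)
    have hE := c.edges_subset_edgeSet hec
    rw [edgeSet_sup] at hE
    rcases hE with h | h
    · exact h
    · rw [show edge u v = fromEdgeSet {s(u, v)} from rfl, edgeSet_fromEdgeSet] at h
      have : e = s(u, v) := h.1
      exact absurd (this ▸ hec) he

private lemma myMaximalForest {V : Type*} {G : SimpleGraph V} {H F : G.Subgraph}
    (hmax : Maximal (fun F => F ≤ H ∧ F.spanningCoe.IsAcyclic) F) :
    F.verts = H.verts ∧
      ∀ u v : V, H.spanningCoe.Reachable u v → F.spanningCoe.Reachable u v := by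
  have hadj : ∀ u v : V, H.Adj u v → F.spanningCoe.Reachable u v := by
    intro u v huv
    by_contra hr
    have hGuv := H.adj_sub huv
    have hle : F ⊔ G.subgraphOfAdj hGuv ≤ H :=
      sup_le hmax.1.1 (subgraphOfAdj_le_of_adj H huv)
    have hsc : (F ⊔ G.subgraphOfAdj hGuv).spanningCoe = F.spanningCoe ⊔ edge u v := by
      ext a b
      simp only [Subgraph.spanningCoe_adj, Subgraph.sup_adj, subgraphOfAdj_adj, sup_adj,
        edge_adj]
      constructor
      · rintro (h | h)
        · exact Or.inl h
        · refine Or.inr ⟨?_, ?_⟩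
          · rw [Sym2.eq_iff] at h
            tauto
          · rintro rfl
            rw [Sym2.eq_iff] at h
            rcases h with ⟨rfl, rfl⟩ | ⟨rfl, rfl⟩ <;> exact hGuv.ne rfl
      · rintro (h | ⟨h, hne⟩)
        · exact Or.inl h
        · right
          rw [Sym2.eq_iff]
          tauto
    have hacy : (F ⊔ G.subgraphOfAdj hGuv).spanningCoe.IsAcyclic := by
      rw [hsc]; exact myAcyclicSupEdge hmax.1.2 hr
    have hFF := hmax.2 ⟨hle, hacy⟩ le_sup_left
    have : F.Adj u v := hFF.2 (by simp)
    exact hr (SimpleGraph.Adj.reachable (show F.spanningCoe.Adj u v from this))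
  constructor
  · refine Set.Subset.antisymm hmax.1.1.1 fun x hx => ?_
    have h1 : F ⊔ G.singletonSubgraph x ≤ H :=
      sup_le hmax.1.1 ((singletonSubgraph_le_iff _ _).2 hx)
    have h2 : (F ⊔ G.singletonSubgraph x).spanningCoe = F.spanningCoe := by
      ext a b
      simp [Subgraph.sup_adj, singletonSubgraph_adj]
    have hFF := hmax.2 ⟨h1, h2 ▸ hmax.1.2⟩ le_sup_left
    exact hFF.1 (by simp)
  · intro u v h
    obtain ⟨w⟩ := h
    induction w with
    | nil => exact Reachable.refl _
    | cons h p ih => exact (hadj _ _ h).trans ih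

/-- Let `G` be a finite simple graph and `G₀ ≤ G₁ ≤ ... ≤ Gₙ = G` an
increasing chain of subgraphs whose last term is all of `G`.  Then there is an acyclic
subgraph `T` of `G` with the same vertex set as `G` such that for every `i ≤ n` and all
vertices `u, v` of `Gᵢ`, `u` and `v` are connected in `Gᵢ` iff they are connected in the
subgraph whose vertex set is that of `Gᵢ` and whose edge set is `E(T) ∩ E(Gᵢ)` (i.e. in
`T ⊓ Gᵢ`).  In other words, there is a spanning forest of `G` simultaneously restricting
to a spanning forest of every subgraph in the chain. -/
theorem stmt14 {V : Type*} [Fintype V] (G : SimpleGraph V) (n : ℕ)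
    (c : ℕ → G.Subgraph)
    (hchain : ∀ i < n, c i ≤ c (i + 1))
    (htop : c n = ⊤) :
    ∃ T : G.Subgraph, T.verts = Set.univ ∧ T.spanningCoe.IsAcyclic ∧
      ∀ i ≤ n, ∀ u ∈ (c i).verts, ∀ v ∈ (c i).verts,
        ((c i).spanningCoe.Reachable u v ↔ (T ⊓ c i).spanningCoe.Reachable u v) := by
  classical
  have hfin : Finite G.Subgraph := by
    apply Finite.of_injective (fun H : G.Subgraph => (H.verts, H.Adj))
    intro a b hab
    rw [Prod.mk.injEq] at hab
    exact Subgraph.ext hab.1 hab.2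
  set S : ℕ → G.Subgraph → Prop :=
    fun i F => F ≤ c (min i n) ∧ F.spanningCoe.IsAcyclic with hS
  have hd : ∀ i, c (min i n) ≤ c (min (i + 1) n) := by
    intro i
    by_cases h : i < n
    · rw [min_eq_left h.le, min_eq_left (Nat.succ_le_of_lt h)]
      exact hchain i h
    · push_neg at h
      rw [min_eq_right h, min_eq_right (h.trans (Nat.le_succ i))]
  have step : ∀ i (T : G.Subgraph), Maximal (S i) T →
      ∃ T', T ≤ T' ∧ Maximal (S (i + 1)) T' := by
    intro i T hT
    exact Finite.exists_le_maximal ⟨hT.1.1.trans (hd i), hT.1.2⟩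
  obtain ⟨F0, hF0le, hF0⟩ :=
    Finite.exists_le_maximal (show S 0 ⊥ from
      ⟨bot_le, by rw [Subgraph.spanningCoe_bot]; exact isAcyclic_bot⟩)
  let F : ∀ i : ℕ, {T : G.Subgraph // Maximal (S i) T} := fun i =>
    Nat.rec ⟨F0, hF0⟩ (fun i prev => ⟨(step i prev.1 prev.2).choose,
      (step i prev.1 prev.2).choose_spec.2⟩) i
  have hsucc : ∀ i, (F i).1 ≤ (F (i + 1)).1 := fun i =>
    (step i (F i).1 (F i).2).choose_spec.1
  have hmono : Monotone fun i => (F i).1 := monotone_nat_of_le_succ hsucc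
  have hcap : ∀ i j, i ≤ j → (F j).1 ⊓ c (min i n) = (F i).1 := by
    intro i j hij
    have h1 : (F i).1 ≤ (F j).1 ⊓ c (min i n) := le_inf (hmono hij) (F i).2.1.1
    have h2 : S i ((F j).1 ⊓ c (min i n)) :=
      ⟨inf_le_right, myAcyclicAnti (Subgraph.spanningCoe_le_of_le inf_le_left) (F j).2.1.2⟩
    exact le_antisymm ((F i).2.2 h2 h1) h1
  obtain ⟨f, hfmax, hfcap⟩ : ∃ f : ℕ → G.Subgraph, (∀ i, Maximal (S i) (f i)) ∧
      ∀ i j, i ≤ j → f j ⊓ c (min i n) = f i :=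
    ⟨fun i => (F i).1, fun i => (F i).2, hcap⟩
  simp only [hS] at hfmax
  refine ⟨f n, ?_, (hfmax n).1.2, ?_⟩
  · have hm := hfmax n
    rw [min_self, htop] at hm
    rw [(myMaximalForest hm).1]
    rfl
  · intro i hi u hu v hv
    have hmin : min i n = i := min_eq_left hi
    have hFi := hfmax i
    rw [hmin] at hFi
    have hTc : f n ⊓ c i = f i := by
      have := hfcap i n hi
      rwa [hmin] at this
    rw [hTc]
    constructor
    · exact (myMaximalForest hFi).2 u v
    · intro h
      exact h.mono (Subgraph.spanningCoe_le_of_le hFi.1.1)
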